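/- Let G = GGP(n,σ) where σ is a product of disjoint cycles of length ≥ 3 and all cycles of σ have even length. Then the Betti deficiency of G is at most 1; explicitly, the spanning tree consisting of all exterior edges u_i u_{i+1} except u_0 u_1 together with all spoke edges u_i v_i has a co-tree whose components are the interior cycles (all even) and the single edge u_0 u_1. -/

import Mathlib

open SimpleGraph

def infectStep {V : Type*} (G : SimpleGraph V) (S : Set V) : Set V :=
  S ∪ {v | ∃ a b, a ≠ b ∧ a ∈ S ∧ b ∈ S ∧ G.Adj v a ∧ G.Adj v b}

def infectIter {V : Type*} (G : SimpleGraph V) (S : Set V) : ℕ → Set V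
  | 0 => S
  | p + 1 => infectStep G (infectIter G S p)

def IsHullSet {V : Type*} (G : SimpleGraph V) (S : Set V) : Prop :=
  ∃ p, infectIter G S p = Set.univ

noncomputable def hullNumber {V : Type*} (G : SimpleGraph V) : ℕ :=
  sInf {m | ∃ S : Set V, S.ncard = m ∧ IsHullSet G S}

noncomputable def infectTime {V : Type*} (G : SimpleGraph V) (S : Set V) : ℕ :=
  sInf {p | infectIter G S p = Set.univ}

def IsCubic {V : Type*} (G : SimpleGraph V) : Prop :=
  ∀ v, {w | G.Adj v w}.ncard = 3

def IsDecyclingSet {V : Type*} (G : SimpleGraph V) (S : Set V) : Prop :=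
  (G.induce Sᶜ).IsAcyclic

noncomputable def decyclingNumber {V : Type*} (G : SimpleGraph V) : ℕ :=
  sInf {m | ∃ S : Set V, S.ncard = m ∧ IsDecyclingSet G S}

def pHull {V : Type*} (G : SimpleGraph V) (S : Set V) : Set V :=
  ⋃ p, infectIter G S p

noncomputable def graphDiam {V : Type*} (G : SimpleGraph V) : ℕ :=
  sSup {d | ∃ a b, d = G.dist a b}

noncomputable def maxCompDiam {V : Type*} (G : SimpleGraph V) : ℕ :=
  sSup {d | ∃ c : G.ConnectedComponent, d = graphDiam (G.induce c.supp)}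

open Fin.NatCast in
def genPetersen (n k : ℕ) [NeZero n] : SimpleGraph (Fin n ⊕ Fin n) :=
  SimpleGraph.fromRel fun x y =>
    match x, y with
    | Sum.inl i, Sum.inl j => j = i + 1
    | Sum.inl i, Sum.inr j => i = j
    | Sum.inr i, Sum.inr j => j = i + (k : Fin n)
    | _, _ => False

def GGP (n : ℕ) [NeZero n] (σ : Equiv.Perm (Fin n)) : SimpleGraph (Fin n ⊕ Fin n) :=
  SimpleGraph.fromRel fun x y =>
    match x, y with
    | Sum.inl i, Sum.inl j => j = i + 1
    | Sum.inl i, Sum.inr j => i = j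
    | Sum.inr i, Sum.inr j => j = σ i
    | _, _ => False


noncomputable def cotreeOddComponents {V : Type*} (H : SimpleGraph V) : ℕ :=
  Nat.card {c : H.ConnectedComponent //
    Odd ({e ∈ H.edgeSet | ∀ v ∈ e, v ∈ c.supp}).ncard}

noncomputable def bettiDeficiency {V : Type*} (G : SimpleGraph V) : ℕ :=
  sInf {m | ∃ T : SimpleGraph V, T ≤ G ∧ T.IsTree ∧
    m = cotreeOddComponents (G \ T)}

def theTree (n : ℕ) [NeZero n] : SimpleGraph (Fin n ⊕ Fin n) :=
  SimpleGraph.fromRel fun x y =>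
    match x, y with
    | Sum.inl i, Sum.inl j => j = i + 1 ∧ i ≠ 0
    | Sum.inl i, Sum.inr j => i = j
    | _, _ => False


set_option linter.unusedSectionVars false
set_option linter.deprecated false


section AuxLemmas

variable {V : Type*}

/-- A graph in which every edge joins a vertex to its "parent" (with strictly smaller rank)
is acyclic. -/
lemma acyclic_of_rank [inst : DecidableEq V] (G : SimpleGraph V) (p : V → V) (f : V → ℕ)
    (h : ∀ x y, G.Adj x y → (y = p x ∧ f y < f x) ∨ (x = p y ∧ f x < f y)) :
    G.IsAcyclic := by
  intro v c hc
  obtain ⟨u, hu, hmax⟩ : ∃ u ∈ c.support, ∀ y ∈ c.support, f y ≤ f u := by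
    have hne : c.support.toFinset.Nonempty := ⟨v, by simp⟩
    obtain ⟨b, hb, hb'⟩ := c.support.toFinset.exists_max_image f hne
    exact ⟨b, by simpa using hb, fun y hy => hb' y (by simpa using hy)⟩
  have hmem : ∀ y, y ∈ (c.rotate u hu).support → y ∈ c.support := by
    intro y hy
    rw [(c.rotate u hu).support_eq_cons, List.mem_cons] at hy
    rcases hy with hy | hy
    · exact hy ▸ hu
    · have := (SimpleGraph.Walk.support_rotate c u hu).mem_iff.mp hy
      exact List.mem_of_mem_tail this
  have hc' := hc.rotate hu
  set c' := c.rotate u hu with hc'def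
  clear_value c'
  cases c' with
  | nil => exact hc'.ne_nil rfl
  | cons ha q =>
    rename_i w
    -- q : G.Walk w u, ha : G.Adj u w
    have hqlen : 2 ≤ q.length := by
      have := hc'.three_le_length
      simp [SimpleGraph.Walk.length_cons] at this
      omega
    -- last step of q
    have hqrev : q.reverse.length = q.length := q.length_reverse
    obtain ⟨x, hb, r, hr⟩ : ∃ (x : V) (hb : G.Adj u x) (r : G.Walk x w), q.reverse = SimpleGraph.Walk.cons hb r := by
      cases hq : q.reverse with
      | nil =>
        exfalso
        have := q.length_reverse
        rw [hq] at this
        simp at this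
        omega
      | cons hb r => exact ⟨_, hb, r, rfl⟩
    -- both w and x are in the support
    have hw : w ∈ c.support := hmem w (by simp)
    have hx : x ∈ c.support := by
      apply hmem
      have : x ∈ q.reverse.support := by rw [hr]; simp
      rw [SimpleGraph.Walk.support_reverse, List.mem_reverse] at this
      simp [SimpleGraph.Walk.support_cons]
      right
      exact this
    -- both are the parent of u
    have hwp : w = p u := by
      rcases h u w ha with ⟨h1, _⟩ | ⟨_, h2⟩
      · exact h1
      · exact absurd (hmax w hw) (by omega)
    have hxp : x = p u := by
      rcases h u x hb with ⟨h1, _⟩ | ⟨_, h2⟩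
      · exact h1
      · exact absurd (hmax x hx) (by omega)
    -- first edge equals last edge: contradiction with trail property
    have hedge : s(u, x) ∈ q.edges := by
      have : s(u, x) ∈ q.reverse.edges := by rw [hr]; simp
      rwa [SimpleGraph.Walk.edges_reverse, List.mem_reverse] at this
    have htrail := hc'.isTrail
    rw [SimpleGraph.Walk.isTrail_cons] at htrail
    have hwx : w = x := hwp.trans hxp.symm
    subst hwx
    exact htrail.2 hedge

/-- Reachability stays inside a set closed under adjacency. -/
lemma walk_closed (G : SimpleGraph V) (S : Set V)
    (hS : ∀ x y, x ∈ S → G.Adj x y → y ∈ S) :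
    ∀ {a b : V}, G.Walk a b → a ∈ S → b ∈ S := by
  intro a b w
  induction w with
  | nil => exact id
  | cons hadj _ ih => exact fun ha => ih (hS _ _ ha hadj)

lemma reach_closed (G : SimpleGraph V) (S : Set V)
    (hS : ∀ x y, x ∈ S → G.Adj x y → y ∈ S)
    {a b : V} (h : G.Reachable a b) (ha : a ∈ S) : b ∈ S := by
  obtain ⟨w⟩ := h
  exact walk_closed G S hS w ha

end AuxLemmas

section Adj
variable {n : ℕ} [NeZero n] {σ : Equiv.Perm (Fin n)}

lemma GGP_adj_ll (i j : Fin n) :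
    (GGP n σ).Adj (Sum.inl i) (Sum.inl j) ↔ i ≠ j ∧ (j = i + 1 ∨ i = j + 1) := by
  simp [GGP, fromRel_adj]

lemma GGP_adj_lr (i j : Fin n) :
    (GGP n σ).Adj (Sum.inl i) (Sum.inr j) ↔ i = j := by
  simp [GGP, fromRel_adj]

lemma GGP_adj_rl (i j : Fin n) :
    (GGP n σ).Adj (Sum.inr i) (Sum.inl j) ↔ j = i := by
  simp [GGP, fromRel_adj, eq_comm]

lemma GGP_adj_rr (i j : Fin n) :
    (GGP n σ).Adj (Sum.inr i) (Sum.inr j) ↔ i ≠ j ∧ (j = σ i ∨ i = σ j) := by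
  simp [GGP, fromRel_adj]

lemma tree_adj_ll (i j : Fin n) :
    (theTree n).Adj (Sum.inl i) (Sum.inl j) ↔ i ≠ j ∧ ((j = i + 1 ∧ i ≠ 0) ∨ (i = j + 1 ∧ j ≠ 0)) := by
  simp [theTree, fromRel_adj]

lemma tree_adj_lr (i j : Fin n) :
    (theTree n).Adj (Sum.inl i) (Sum.inr j) ↔ i = j := by
  simp [theTree, fromRel_adj]

lemma tree_adj_rl (i j : Fin n) :
    (theTree n).Adj (Sum.inr i) (Sum.inl j) ↔ j = i := by
  simp [theTree, fromRel_adj, eq_comm]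

lemma tree_adj_rr (i j : Fin n) :
    ¬ (theTree n).Adj (Sum.inr i) (Sum.inr j) := by
  simp [theTree, fromRel_adj]

end Adj

section HAdj
variable {n : ℕ} [NeZero n] {σ : Equiv.Perm (Fin n)}

open Fin.NatCast Fin.CommRing in
lemma two_ne_zero_fin (hn : 3 ≤ n) : (2 : Fin n) ≠ 0 := by
  have : ((2 : ℕ) : Fin n) = (2 : Fin n) := by push_cast; ring
  rw [← this, Ne, Fin.natCast_eq_zero]
  intro hdvd
  have := Nat.le_of_dvd (by norm_num) hdvd
  omega

open Fin.CommRing in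
lemma H_adj_ll (hn : 3 ≤ n) (i j : Fin n) :
    (GGP n σ \ theTree n).Adj (Sum.inl i) (Sum.inl j) ↔ (i = 0 ∧ j = 1) ∨ (i = 1 ∧ j = 0) := by
  rw [sdiff_adj, GGP_adj_ll, tree_adj_ll]
  constructor
  · rintro ⟨⟨hne, hor⟩, hnt⟩
    rcases hor with h1 | h1
    · left
      have hi : i = 0 := by
        by_contra hi0
        exact hnt ⟨hne, Or.inl ⟨h1, hi0⟩⟩
      exact ⟨hi, by rw [h1, hi, zero_add]⟩
    · right
      have hj : j = 0 := by
        by_contra hj0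
        exact hnt ⟨hne, Or.inr ⟨h1, hj0⟩⟩
      exact ⟨by rw [h1, hj, zero_add], hj⟩
  · have h01 : (0 : Fin n) ≠ 1 := by
      intro h
      have := Fin.one_eq_zero_iff.mp h.symm
      omega
    rintro (⟨rfl, rfl⟩ | ⟨rfl, rfl⟩)
    · refine ⟨⟨h01, Or.inl (zero_add 1).symm⟩, ?_⟩
      rintro ⟨-, (⟨-, hc⟩ | ⟨hc, -⟩)⟩
      · exact hc rfl
      · exact two_ne_zero_fin hn (by rw [show (2:Fin n) = 1 + 1 by ring]; exact hc.symm)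
    · refine ⟨⟨h01.symm, Or.inr (zero_add 1).symm⟩, ?_⟩
      rintro ⟨-, (⟨hc, -⟩ | ⟨-, hc⟩)⟩
      · exact two_ne_zero_fin hn (by rw [show (2:Fin n) = 1 + 1 by ring]; exact hc.symm)
      · exact hc rfl

lemma H_adj_lr (i j : Fin n) : ¬ (GGP n σ \ theTree n).Adj (Sum.inl i) (Sum.inr j) := by
  rw [sdiff_adj, GGP_adj_lr, tree_adj_lr]
  tauto

lemma H_adj_rl (i j : Fin n) : ¬ (GGP n σ \ theTree n).Adj (Sum.inr i) (Sum.inl j) := by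
  rw [sdiff_adj, GGP_adj_rl, tree_adj_rl]
  tauto

lemma H_adj_rr (i j : Fin n) :
    (GGP n σ \ theTree n).Adj (Sum.inr i) (Sum.inr j) ↔ i ≠ j ∧ (j = σ i ∨ i = σ j) := by
  rw [sdiff_adj, GGP_adj_rr]
  simp [tree_adj_rr]

end HAdj




section Tree
variable {n : ℕ} [NeZero n] {σ : Equiv.Perm (Fin n)}

lemma tree_le (σ : Equiv.Perm (Fin n)) : theTree n ≤ GGP n σ := by
  intro x y hxy
  match x, y with
  | Sum.inl i, Sum.inl j =>
    rw [tree_adj_ll] at hxy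
    rw [GGP_adj_ll]
    tauto
  | Sum.inl i, Sum.inr j =>
    rw [tree_adj_lr] at hxy
    rw [GGP_adj_lr]
    exact hxy
  | Sum.inr i, Sum.inl j =>
    rw [tree_adj_rl] at hxy
    rw [GGP_adj_rl]
    exact hxy
  | Sum.inr i, Sum.inr j => exact absurd hxy (tree_adj_rr i j)

lemma one_ne_zero_fin (hn : 3 ≤ n) : (1 : Fin n) ≠ 0 := by
  intro h
  have := Fin.one_eq_zero_iff.mp h
  omega

open Fin.NatCast Fin.CommRing in
lemma fin_val_one (hn : 3 ≤ n) : (1 : Fin n).val = 1 := by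
  have h1 : ((1:ℕ) : Fin n) = (1 : Fin n) := by push_cast; ring
  rw [← h1, Fin.val_cast_of_lt (by omega)]

lemma fin_add_one_val (hn : 3 ≤ n) (i : Fin n) (h : i.val + 1 < n) :
    (i + 1).val = i.val + 1 := by
  rw [Fin.add_def, fin_val_one hn]
  show (i.val + 1) % n = i.val + 1
  exact Nat.mod_eq_of_lt h

lemma fin_add_one_eq_zero (hn : 3 ≤ n) (i : Fin n) (h : i.val + 1 = n) :
    i + 1 = 0 := by
  apply Fin.ext
  rw [Fin.add_def, fin_val_one hn, h]
  show n % n = (0 : Fin n).val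
  rw [Nat.mod_self, Fin.val_zero]

open Fin.NatCast Fin.CommRing in
lemma tree_connected (hn : 3 ≤ n) : (theTree n).Connected := by
  rw [connected_iff]
  refine ⟨?_, ⟨Sum.inl 0⟩⟩
  have key : ∀ m : ℕ, m < n → (theTree n).Reachable (Sum.inl 1) (Sum.inl (1 + (m : Fin n))) := by
    intro m
    induction m with
    | zero =>
      intro _
      simpa using Reachable.refl (Sum.inl (1 : Fin n) : Fin n ⊕ Fin n)
    | succ k ih =>
      intro hk
      have hkn : k < n := by omega
      refine (ih hkn).trans (Adj.reachable ?_)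
      rw [tree_adj_ll]
      have h2 : ((k : Fin n)).val = k := Fin.val_cast_of_lt hkn
      have hval : (1 + (k : Fin n)).val = k + 1 := by
        rw [add_comm, fin_add_one_val hn _ (by rw [h2]; omega), h2]
      have hne0 : (1 + (k : Fin n)) ≠ 0 := by
        intro h
        rw [h, Fin.val_zero] at hval
        omega
      constructor
      · intro h
        have : (1 : Fin n) = 0 := by
          have := congrArg (· - (1 + (k:Fin n))) h
          simpa [sub_self, add_sub_cancel_left] using this.symm
        exact one_ne_zero_fin hn this
      · left
        refine ⟨?_, hne0⟩
        push_cast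
        ring
  have hinl : ∀ j : Fin n, (theTree n).Reachable (Sum.inl 1) (Sum.inl j) := by
    intro j
    have h1 : ((j - 1 : Fin n).val : Fin n) = j - 1 := Fin.cast_val_eq_self _
    have := key (j - 1).val (j - 1).isLt
    rw [h1] at this
    simpa [add_sub_cancel] using this
  intro x y
  have hx : ∀ z : Fin n ⊕ Fin n, (theTree n).Reachable (Sum.inl 1) z := by
    rintro (j | j)
    · exact hinl j
    · exact (hinl j).trans (Adj.reachable (by rw [tree_adj_lr]))
  exact (hx x).symm.trans (hx y)

lemma tree_acyclic (hn : 3 ≤ n) : (theTree n).IsAcyclic := by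
  apply acyclic_of_rank (theTree n)
    (fun x => match x with
      | Sum.inl i => Sum.inl (i - 1)
      | Sum.inr i => Sum.inl i)
    (fun x => match x with
      | Sum.inl i => if i = 0 then n - 1 else i.val - 1
      | Sum.inr _ => n + 1)
  have main : ∀ i j : Fin n, j = i + 1 → i ≠ 0 →
      (if i = 0 then n - 1 else i.val - 1) < (if j = i + 1 then (if j = 0 then n - 1 else j.val - 1) else 0) := by
    intro i j hj hi0
    rw [if_pos hj]
    rw [if_neg hi0]
    have hi1 : 1 ≤ i.val := by
      rcases Nat.eq_zero_or_pos i.val with h0 | h0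
      · exact absurd (Fin.ext (by rw [h0, Fin.val_zero]) : i = 0) hi0
      · exact h0
    have hilt := i.isLt
    rcases Nat.lt_or_ge (i.val + 1) n with hlt | hge
    · have hjval : j.val = i.val + 1 := by rw [hj, fin_add_one_val hn i hlt]
      have hj0 : j ≠ 0 := by
        intro h
        rw [h, Fin.val_zero] at hjval
        omega
      rw [if_neg hj0]
      omega
    · have hn' : i.val + 1 = n := by omega
      have hj0 : j = 0 := by rw [hj]; exact fin_add_one_eq_zero hn i hn'
      rw [if_pos hj0]
      omega
  intro x y hxy
  match x, y with
  | Sum.inl i, Sum.inl j =>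
    rw [tree_adj_ll] at hxy
    obtain ⟨hne, ⟨hj, hi0⟩ | ⟨hi, hj0⟩⟩ := hxy
    · right
      refine ⟨?_, ?_⟩
      · show Sum.inl i = Sum.inl (j - 1)
        rw [hj, add_sub_cancel_right]
      · have := main i j hj hi0
        rw [if_pos hj] at this
        exact this
    · left
      refine ⟨?_, ?_⟩
      · show Sum.inl j = Sum.inl (i - 1)
        rw [hi, add_sub_cancel_right]
      · have := main j i hi hj0
        rw [if_pos hi] at this
        exact this
  | Sum.inl i, Sum.inr j =>
    rw [tree_adj_lr] at hxy
    subst hxy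
    right
    refine ⟨rfl, ?_⟩
    show (if i = 0 then n - 1 else i.val - 1) < n + 1
    have := i.isLt
    split <;> omega
  | Sum.inr i, Sum.inl j =>
    rw [tree_adj_rl] at hxy
    subst hxy
    left
    refine ⟨rfl, ?_⟩
    show (if j = 0 then n - 1 else j.val - 1) < n + 1
    have := j.isLt
    split <;> omega
  | Sum.inr i, Sum.inr j => exact absurd hxy (tree_adj_rr i j)

lemma tree_isTree (hn : 3 ≤ n) : (theTree n).IsTree :=
  ⟨tree_connected hn, tree_acyclic hn⟩

end Tree


section Components
variable {n : ℕ} [NeZero n] {σ : Equiv.Perm (Fin n)}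

lemma reach_inl0 (hn : 3 ≤ n) (x : Fin n ⊕ Fin n) :
    (GGP n σ \ theTree n).Reachable (Sum.inl 0) x ↔ x = Sum.inl 0 ∨ x = Sum.inl 1 := by
  constructor
  · intro h
    refine reach_closed _ {y | y = Sum.inl 0 ∨ y = Sum.inl 1} ?_ h (Or.inl rfl)
    rintro a b (rfl | rfl) hab
    · match b with
      | Sum.inl j =>
        rw [H_adj_ll hn] at hab
        rcases hab with ⟨-, rfl⟩ | ⟨h01, -⟩
        · exact Or.inr rfl
        · exact absurd h01.symm (one_ne_zero_fin hn)
      | Sum.inr j => exact absurd hab (H_adj_lr 0 j)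
    · match b with
      | Sum.inl j =>
        rw [H_adj_ll hn] at hab
        rcases hab with ⟨h10, -⟩ | ⟨-, rfl⟩
        · exact absurd h10 (one_ne_zero_fin hn)
        · exact Or.inl rfl
      | Sum.inr j => exact absurd hab (H_adj_lr 1 j)
  · rintro (rfl | rfl)
    · exact Reachable.refl _
    · exact Adj.reachable (by rw [H_adj_ll hn]; exact Or.inl ⟨rfl, rfl⟩)

lemma reach_inl_other (hn : 3 ≤ n) (i : Fin n) (hi0 : i ≠ 0) (hi1 : i ≠ 1) (x : Fin n ⊕ Fin n) :
    (GGP n σ \ theTree n).Reachable (Sum.inl i) x ↔ x = Sum.inl i := by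
  constructor
  · intro h
    refine reach_closed _ {y | y = Sum.inl i} ?_ h rfl
    rintro a b rfl hab
    match b with
    | Sum.inl j =>
      rw [H_adj_ll hn] at hab
      rcases hab with ⟨h0, -⟩ | ⟨h1, -⟩
      · exact absurd h0 hi0
      · exact absurd h1 hi1
    | Sum.inr j => exact absurd hab (H_adj_lr i j)
  · rintro rfl
    exact Reachable.refl _

lemma reach_inr (hfix : ∀ i, σ i ≠ i) (i : Fin n) (x : Fin n ⊕ Fin n) :
    (GGP n σ \ theTree n).Reachable (Sum.inr i) x ↔ ∃ j, x = Sum.inr j ∧ σ.SameCycle i j := by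
  constructor
  · intro h
    refine reach_closed _ {y | ∃ j, y = Sum.inr j ∧ σ.SameCycle i j} ?_ h ⟨i, rfl, Equiv.Perm.SameCycle.refl σ i⟩
    rintro a b ⟨j, rfl, hsc⟩ hab
    match b with
    | Sum.inl k => exact absurd hab (H_adj_rl j k)
    | Sum.inr k =>
      rw [H_adj_rr] at hab
      rcases hab with ⟨-, rfl | hk⟩
      · exact ⟨σ j, rfl, by rwa [Equiv.Perm.sameCycle_apply_right]⟩
      · refine ⟨k, rfl, ?_⟩
        rw [hk, Equiv.Perm.sameCycle_apply_right] at hsc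
        exact hsc
  · rintro ⟨j, rfl, hsc⟩
    obtain ⟨m, -, rfl⟩ := hsc.exists_pow_eq'
    clear hsc
    induction m with
    | zero => simpa using Reachable.refl (Sum.inr i : Fin n ⊕ Fin n)
    | succ k ih =>
      refine ih.trans (Adj.reachable ?_)
      rw [H_adj_rr]
      have hstep : (σ ^ (k + 1)) i = σ ((σ ^ k) i) := by
        rw [pow_succ']
        rfl
      rw [hstep]
      exact ⟨(hfix _).symm, Or.inl rfl⟩

lemma cycleCard_mem (hfix : ∀ i, σ i ≠ i) (b : Fin n) :
    (σ.cycleOf b).support.card ∈ σ.cycleType := by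
  rw [Equiv.Perm.cycleType_def, Multiset.mem_map]
  refine ⟨σ.cycleOf b, ?_, rfl⟩
  rw [Finset.mem_val, Equiv.Perm.cycleOf_mem_cycleFactorsFinset_iff]
  simpa using hfix b

lemma sameCycle_set (hfix : ∀ i, σ i ≠ i) (i : Fin n) :
    {a | σ.SameCycle i a} = ↑(σ.cycleOf i).support := by
  ext a
  rw [Set.mem_setOf_eq]
  simp only [Finset.mem_coe, Equiv.Perm.mem_support_cycleOf_iff]
  constructor
  · intro h
    exact ⟨h, by simpa using hfix i⟩
  · exact fun h => h.1

lemma no2cycle (hfix : ∀ i, σ i ≠ i) (hlen : ∀ c ∈ σ.cycleType, 3 ≤ c) (b : Fin n) :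
    σ (σ b) ≠ b := by
  intro h2
  have hsub : (σ.cycleOf b).support ⊆ {b, σ b} := by
    intro x hx
    rw [Equiv.Perm.mem_support_cycleOf_iff] at hx
    obtain ⟨m, -, rfl⟩ := hx.1.exists_pow_eq'
    clear hx
    induction m with
    | zero => simp
    | succ k ih =>
      have hstep : (σ ^ (k + 1)) b = σ ((σ ^ k) b) := by rw [pow_succ']; rfl
      rw [hstep]
      rcases Finset.mem_insert.mp ih with h | h
      · rw [h]
        simp
      · rw [Finset.mem_singleton] at h
        rw [h, h2]
        simp
  have hcard : (σ.cycleOf b).support.card ≤ 2 :=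
    le_trans (Finset.card_le_card hsub) (le_trans (Finset.card_insert_le _ _) (by simp))
  have := hlen _ (cycleCard_mem hfix b)
  omega

end Components


section Final
variable {n : ℕ} [NeZero n] {σ : Equiv.Perm (Fin n)}

lemma supp_inl0 (hn : 3 ≤ n) (x : Fin n ⊕ Fin n) :
    x ∈ ((GGP n σ \ theTree n).connectedComponentMk (Sum.inl 0)).supp ↔
      (x = Sum.inl 0 ∨ x = Sum.inl 1) := by
  rw [ConnectedComponent.mem_supp_iff, ConnectedComponent.eq]
  constructor
  · intro h
    exact (reach_inl0 hn x).mp h.symm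
  · intro h
    exact ((reach_inl0 hn x).mpr h).symm

lemma edges_comp_inl0 (hn : 3 ≤ n) :
    {e ∈ (GGP n σ \ theTree n).edgeSet |
      ∀ v ∈ e, v ∈ ((GGP n σ \ theTree n).connectedComponentMk (Sum.inl 0)).supp} =
    {s(Sum.inl 0, Sum.inl 1)} := by
  ext e
  induction e with
  | _ x y =>
    simp only [Set.mem_setOf_eq, Set.mem_singleton_iff, mem_edgeSet]
    constructor
    · rintro ⟨hadj, hv⟩
      have hx := (supp_inl0 hn x).mp (hv x (Sym2.mem_mk_left x y))
      have hy := (supp_inl0 hn y).mp (hv y (Sym2.mem_mk_right x y))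
      rcases hx with rfl | rfl <;> rcases hy with rfl | rfl
      · exact absurd rfl hadj.ne
      · rfl
      · exact Sym2.eq_swap
      · exact absurd rfl hadj.ne
    · intro h
      rcases Sym2.eq_iff.mp h with ⟨rfl, rfl⟩ | ⟨rfl, rfl⟩
      · refine ⟨by rw [H_adj_ll hn]; exact Or.inl ⟨rfl, rfl⟩, ?_⟩
        intro v hv
        rw [supp_inl0 hn]
        rcases Sym2.mem_iff.mp hv with rfl | rfl
        · exact Or.inl rfl
        · exact Or.inr rfl
      · refine ⟨by rw [H_adj_ll hn]; exact Or.inr ⟨rfl, rfl⟩, ?_⟩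
        intro v hv
        rw [supp_inl0 hn]
        rcases Sym2.mem_iff.mp hv with rfl | rfl
        · exact Or.inr rfl
        · exact Or.inl rfl

lemma edges_comp_inl_other (hn : 3 ≤ n) (i : Fin n) (hi0 : i ≠ 0) (hi1 : i ≠ 1) :
    {e ∈ (GGP n σ \ theTree n).edgeSet |
      ∀ v ∈ e, v ∈ ((GGP n σ \ theTree n).connectedComponentMk (Sum.inl i)).supp} = ∅ := by
  have hs : ∀ x, x ∈ ((GGP n σ \ theTree n).connectedComponentMk (Sum.inl i)).supp ↔ x = Sum.inl i := by
    intro x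
    rw [ConnectedComponent.mem_supp_iff, ConnectedComponent.eq]
    constructor
    · intro h
      exact (reach_inl_other hn i hi0 hi1 x).mp h.symm
    · intro h
      exact ((reach_inl_other hn i hi0 hi1 x).mpr h).symm
  ext e
  induction e with
  | _ x y =>
    simp only [Set.mem_setOf_eq, Set.mem_empty_iff_false, iff_false, not_and, mem_edgeSet]
    intro hadj hv
    have hx := (hs x).mp (hv x (Sym2.mem_mk_left x y))
    have hy := (hs y).mp (hv y (Sym2.mem_mk_right x y))
    rw [hx, hy] at hadj
    exact absurd rfl hadj.ne

lemma edges_comp_inr (hfix : ∀ i, σ i ≠ i) (i : Fin n) :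
    {e ∈ (GGP n σ \ theTree n).edgeSet |
      ∀ v ∈ e, v ∈ ((GGP n σ \ theTree n).connectedComponentMk (Sum.inr i)).supp} =
    (fun a => s(Sum.inr a, Sum.inr (σ a))) '' {a | σ.SameCycle i a} := by
  have hs : ∀ x, x ∈ ((GGP n σ \ theTree n).connectedComponentMk (Sum.inr i)).supp ↔
      ∃ j, x = Sum.inr j ∧ σ.SameCycle i j := by
    intro x
    rw [ConnectedComponent.mem_supp_iff, ConnectedComponent.eq]
    constructor
    · intro h
      exact (reach_inr hfix i x).mp h.symm
    · intro h
      exact ((reach_inr hfix i x).mpr h).symm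
  ext e
  induction e with
  | _ x y =>
    simp only [Set.mem_setOf_eq, Set.mem_image, mem_edgeSet]
    constructor
    · rintro ⟨hadj, hv⟩
      obtain ⟨a, rfl, ha⟩ := (hs x).mp (hv x (Sym2.mem_mk_left x y))
      obtain ⟨b, rfl, hb⟩ := (hs y).mp (hv y (Sym2.mem_mk_right _ y))
      rw [H_adj_rr] at hadj
      rcases hadj with ⟨-, rfl | hab⟩
      · exact ⟨a, ha, rfl⟩
      · exact ⟨b, hb, by rw [← hab, Sym2.eq_swap]⟩
    · rintro ⟨a, ha, heq⟩
      rcases Sym2.eq_iff.mp heq with ⟨h1, h2⟩ | ⟨h1, h2⟩ <;> rw [← h1, ← h2]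
      · refine ⟨by rw [H_adj_rr]; exact ⟨(hfix a).symm, Or.inl rfl⟩, ?_⟩
        intro v hv
        rw [hs]
        rcases Sym2.mem_iff.mp hv with rfl | rfl
        · exact ⟨a, rfl, ha⟩
        · exact ⟨σ a, rfl, by rwa [Equiv.Perm.sameCycle_apply_right]⟩
      · refine ⟨by rw [H_adj_rr]; exact ⟨hfix a, Or.inr rfl⟩, ?_⟩
        intro v hv
        rw [hs]
        rcases Sym2.mem_iff.mp hv with rfl | rfl
        · exact ⟨σ a, rfl, by rwa [Equiv.Perm.sameCycle_apply_right]⟩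
        · exact ⟨a, rfl, ha⟩

lemma even_edges_inr (hfix : ∀ i, σ i ≠ i) (hlen : ∀ c ∈ σ.cycleType, 3 ≤ c)
    (heven : ∀ c ∈ σ.cycleType, Even c) (i : Fin n) :
    Even ({e ∈ (GGP n σ \ theTree n).edgeSet |
      ∀ v ∈ e, v ∈ ((GGP n σ \ theTree n).connectedComponentMk (Sum.inr i)).supp}).ncard := by
  rw [edges_comp_inr hfix i]
  have hinj : Set.InjOn (fun a => s(Sum.inr a, Sum.inr (σ a)) : Fin n → Sym2 (Fin n ⊕ Fin n))
      {a | σ.SameCycle i a} := by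
    intro a _ b _ heq
    simp only [Sym2.eq_iff, Sum.inr.injEq] at heq
    rcases heq with ⟨h1, -⟩ | ⟨h1, h2⟩
    · exact h1
    · exact absurd (by rw [← h1, h2] : σ (σ b) = b) (no2cycle hfix hlen b)
  rw [Set.ncard_image_of_injOn hinj, sameCycle_set hfix i, Set.ncard_coe_finset]
  exact heven _ (cycleCard_mem hfix i)

lemma cot_eq_one (hn : 3 ≤ n) (hfix : ∀ i, σ i ≠ i) (hlen : ∀ c ∈ σ.cycleType, 3 ≤ c)
    (heven : ∀ c ∈ σ.cycleType, Even c) :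
    cotreeOddComponents (GGP n σ \ theTree n) = 1 := by
  have hodd0 : Odd ({e ∈ (GGP n σ \ theTree n).edgeSet |
      ∀ v ∈ e, v ∈ ((GGP n σ \ theTree n).connectedComponentMk (Sum.inl 0)).supp}).ncard := by
    rw [edges_comp_inl0 hn, Set.ncard_singleton]
    exact odd_one
  have hclass : ∀ c : (GGP n σ \ theTree n).ConnectedComponent,
      Odd ({e ∈ (GGP n σ \ theTree n).edgeSet | ∀ v ∈ e, v ∈ c.supp}).ncard →
      c = (GGP n σ \ theTree n).connectedComponentMk (Sum.inl 0) := by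
    intro c hodd
    obtain ⟨x, hx⟩ := c.exists_rep
    have hx' : (GGP n σ \ theTree n).connectedComponentMk x = c := hx
    rw [← hx'] at hodd ⊢
    clear hx hx'
    match x with
    | Sum.inl i =>
      by_cases hi0 : i = 0
      · rw [hi0]
      · by_cases hi1 : i = 1
        · subst hi1
          rw [ConnectedComponent.eq]
          exact Adj.reachable (by rw [H_adj_ll hn]; exact Or.inr ⟨rfl, rfl⟩)
        · rw [edges_comp_inl_other hn i hi0 hi1] at hodd
          simp [Set.ncard_empty] at hodd
    | Sum.inr i =>
      exact absurd hodd (by rw [← Nat.not_even_iff_odd, not_not]; exact even_edges_inr hfix hlen heven i)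
  rw [cotreeOddComponents, Nat.card_eq_one_iff_unique]
  constructor
  · constructor
    rintro ⟨c1, h1⟩ ⟨c2, h2⟩
    apply Subtype.ext
    show c1 = c2
    rw [hclass c1 h1, hclass c2 h2]
  · exact ⟨⟨_, hodd0⟩⟩

end Final


theorem stmt18 (n : ℕ) [NeZero n] (hn : 3 ≤ n) (σ : Equiv.Perm (Fin n))
    (hσ : σ ≠ 1) (hfix : ∀ i, σ i ≠ i)
    (hlen : ∀ c ∈ σ.cycleType, 3 ≤ c)
    (heven : ∀ c ∈ σ.cycleType, Even c) :
    bettiDeficiency (GGP n σ) ≤ 1 ∧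
    (theTree n ≤ GGP n σ ∧ (theTree n).IsTree) ∧
    cotreeOddComponents (GGP n σ \ theTree n) = 1 := by
  refine ⟨?_, ⟨tree_le σ, tree_isTree hn⟩, cot_eq_one hn hfix hlen heven⟩
  apply Nat.sInf_le
  exact ⟨theTree n, tree_le σ, tree_isTree hn, (cot_eq_one hn hfix hlen heven).symm⟩
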